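/- arXiv:2403.17129 — 3 statements merged into one kernel-verified Lean document; each statement's English description precedes it below -/
import Mathlib

section
/- The restrained domination number of the Petersen graph is exactly 4; in particular, the Petersen graph is a cubic graph of order 10 attaining equality in the bound γ_r(G) ≤ (2/5)·|V(G)| for cubic graphs. -/
/-- `S` is a restrained dominating set of `G`: every vertex not in `S` has a
neighbor in `S` (domination) and also a neighbor not in `S` (restraint). -/
def IsRestrainedDomSet {V : Type*} (G : SimpleGraph V) (S : Set V) : Prop :=
  (∀ v ∉ S, ∃ u ∈ S, G.Adj v u) ∧ (∀ v ∉ S, ∃ u ∉ S, G.Adj v u)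

/-- The restrained domination number of a finite graph: the minimum cardinality
of a restrained dominating set. -/
noncomputable def restrainedDominationNumber {V : Type*} [Fintype V] (G : SimpleGraph V) : ℕ :=
  sInf {n : ℕ | ∃ S : Set V, IsRestrainedDomSet G S ∧ S.ncard = n}

/-- The Petersen graph, realized as the Kneser graph `K(5,2)`: vertices are the
2-element subsets of a 5-element set, adjacent iff disjoint. -/
def petersenGraph : SimpleGraph {s : Finset (Fin 5) // s.card = 2} where
  Adj a b := Disjoint a.1 b.1
  symm := ⟨fun _ _ h => h.symm⟩
  loopless := ⟨by
    intro a h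
    have h0 : a.1 = ∅ := by simpa using disjoint_self.mp h
    have h2 := a.2
    rw [h0] at h2
    simp at h2⟩

instance : DecidableRel petersenGraph.Adj :=
  fun a b => decidable_of_iff (Disjoint a.1 b.1) Iff.rfl

abbrev PV := {s : Finset (Fin 5) // s.card = 2}

set_option maxHeartbeats 4000000 in
set_option maxRecDepth 100000 in
lemma petersen_no_small_rds : ∀ a b c : PV,
    ¬((∀ v ∉ ({a,b,c} : Finset PV), ∃ u ∈ ({a,b,c} : Finset PV), petersenGraph.Adj v u) ∧
      (∀ v ∉ ({a,b,c} : Finset PV), ∃ u ∉ ({a,b,c} : Finset PV), petersenGraph.Adj v u)) := by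
  decide

def goodF : Finset PV :=
  {⟨{0,1}, by decide⟩, ⟨{0,2}, by decide⟩, ⟨{0,3}, by decide⟩, ⟨{0,4}, by decide⟩}

lemma goodF_works :
    (∀ v ∉ goodF, ∃ u ∈ goodF, petersenGraph.Adj v u) ∧
    (∀ v ∉ goodF, ∃ u ∉ goodF, petersenGraph.Adj v u) ∧ goodF.card = 4 := by
  decide

lemma card10 : Fintype.card PV = 10 := by decide

lemma deg3 : ∀ v : PV, (petersenGraph.neighborFinset v).card = 3 := by decide

lemma rdn_eq_four : restrainedDominationNumber petersenGraph = 4 := by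
  have hmem : (4 : ℕ) ∈ {n : ℕ | ∃ S : Set PV, IsRestrainedDomSet petersenGraph S ∧ S.ncard = n} := by
    refine ⟨(goodF : Set PV), ⟨?_, ?_⟩, ?_⟩
    · intro v hv
      obtain ⟨u, hu, hadj⟩ := goodF_works.1 v (by simpa using hv)
      exact ⟨u, by simpa using hu, hadj⟩
    · intro v hv
      obtain ⟨u, hu, hadj⟩ := goodF_works.2.1 v (by simpa using hv)
      exact ⟨u, by simpa using hu, hadj⟩
    · rw [Set.ncard_coe_finset]; exact goodF_works.2.2
  have hlow : ∀ n ∈ {n : ℕ | ∃ S : Set PV, IsRestrainedDomSet petersenGraph S ∧ S.ncard = n},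
      4 ≤ n := by
    rintro n ⟨S, ⟨hdom, hres⟩, hcard⟩
    by_contra hlt
    push_neg at hlt
    have hfin : S.Finite := S.toFinite
    set F := hfin.toFinset with hF
    have hSF : S = ↑F := by simp [hF]
    have hcardF : F.card = n := by
      rw [← hcard, hSF, Set.ncard_coe_finset]
    have hne : F.Nonempty := by
      rcases F.eq_empty_or_nonempty with h | h
      · exfalso
        have hv : (⟨{0,1}, by decide⟩ : PV) ∉ S := by
          rw [hSF, h]; simp
        obtain ⟨u, hu, _⟩ := hdom _ hv
        rw [hSF, h] at hu; simp at hu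
      · exact h
    have h13 : F.card = 1 ∨ F.card = 2 ∨ F.card = 3 := by
      have := Finset.card_pos.mpr hne
      omega
    have key : ∃ a b c : PV, F = ({a, b, c} : Finset PV) := by
      rcases h13 with h | h | h
      · obtain ⟨a, ha⟩ := Finset.card_eq_one.mp h
        exact ⟨a, a, a, by simp [ha]⟩
      · obtain ⟨a, b, _, hab⟩ := Finset.card_eq_two.mp h
        exact ⟨a, b, b, by simp [hab]⟩
      · obtain ⟨a, b, c, _, _, _, habc⟩ := Finset.card_eq_three.mp h
        exact ⟨a, b, c, habc⟩
    obtain ⟨a, b, c, habc⟩ := key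
    apply petersen_no_small_rds a b c
    constructor
    · intro v hv
      obtain ⟨u, hu, hadj⟩ := hdom v (by rw [hSF, habc]; simpa using hv)
      exact ⟨u, by rw [hSF, habc] at hu; simpa using hu, hadj⟩
    · intro v hv
      obtain ⟨u, hu, hadj⟩ := hres v (by rw [hSF, habc]; simpa using hv)
      exact ⟨u, by rw [hSF, habc] at hu; simpa using hu, hadj⟩
  exact le_antisymm (Nat.sInf_le hmem) (hlow _ (Nat.sInf_mem ⟨4, hmem⟩))

/-- The Petersen graph has restrained domination number exactly `4`; it is a
cubic graph of order `10` attaining equality in `γ_r(G) ≤ (2/5)·|V(G)|`. -/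
theorem restrainedDominationNumber_petersen :
    restrainedDominationNumber petersenGraph = 4 ∧
    Fintype.card {s : Finset (Fin 5) // s.card = 2} = 10 ∧
    (∀ v, (petersenGraph.neighborSet v).ncard = 3) ∧
    (restrainedDominationNumber petersenGraph : ℝ) =
      (2 / 5) * Fintype.card {s : Finset (Fin 5) // s.card = 2} := by
  refine ⟨rdn_eq_four, card10, ?_, ?_⟩
  · intro v
    rw [Set.ncard_eq_toFinset_card', ← SimpleGraph.neighborFinset_def]
    exact deg3 v
  · rw [rdn_eq_four, card10]
    norm_num
end

section
/- Let G be a finite simple graph in which every vertex has degree 2 or degree 3, and suppose G is bipartite with partite sets the set S of degree-2 vertices and the set L of degree-3 vertices (i.e., every edge of G joins a vertex of degree 2 to a vertex of degree 3). Then γ_r(G) ≤ |L|, the number of degree-3 vertices of G. -/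
open Finset

lemma rds_aux {V : Type*} [Fintype V] [DecidableEq V] (G : SimpleGraph V) [DecidableRel G.Adj]
    (hdeg : ∀ v : V, (G.neighborSet v).ncard = 2 ∨ (G.neighborSet v).ncard = 3)
    (hbip : ∀ u v : V, G.Adj u v →
      ((G.neighborSet u).ncard = 2 ∧ (G.neighborSet v).ncard = 3) ∨
      ((G.neighborSet u).ncard = 3 ∧ (G.neighborSet v).ncard = 2)) :
    ∃ D : Finset V, IsRestrainedDomSet G ↑D ∧
      D.card ≤ (Finset.univ.filter (fun v => (G.neighborSet v).ncard = 3)).card := by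
  -- translate ncard to neighborFinset card
  have hnc : ∀ v : V, (G.neighborSet v).ncard = (G.neighborFinset v).card := by
    intro v; rw [Set.ncard_eq_toFinset_card']; rfl
  set d : V → ℕ := fun v => (G.neighborFinset v).card with hd
  have hdeg' : ∀ v : V, d v = 2 ∨ d v = 3 := by
    intro v; rw [hd]; simp only [← hnc]; exact hdeg v
  have hbip' : ∀ u v : V, G.Adj u v → (d u = 2 ∧ d v = 3) ∨ (d u = 3 ∧ d v = 2) := by
    intro u v huv; simp only [hd, ← hnc]; exact hbip u v huv
  set L : Finset V := Finset.univ.filter (fun v => (G.neighborSet v).ncard = 3) with hL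
  set S : Finset V := Finset.univ.filter (fun v => (G.neighborSet v).ncard = 2) with hS
  have hmemL : ∀ v : V, v ∈ L ↔ d v = 3 := by
    intro v; rw [hL]; simp [hnc, hd]
  have hmemS : ∀ v : V, v ∈ S ↔ d v = 2 := by
    intro v; rw [hS]; simp [hnc, hd]
  have hLorS : ∀ v : V, v ∈ L ∨ v ∈ S := by
    intro v; rcases hdeg' v with h | h
    · exact Or.inr ((hmemS v).2 h)
    · exact Or.inl ((hmemL v).2 h)
  have hLS : ∀ v : V, v ∈ L → v ∉ S := by
    intro v hv hs; rw [hmemL] at hv; rw [hmemS] at hs; omega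
  have hadjLS : ∀ l ∈ L, ∀ s : V, G.Adj l s → s ∈ S := by
    intro l hl s hls
    rcases hbip' l s hls with ⟨h1, _⟩ | ⟨_, h2⟩
    · rw [hmemL] at hl; omega
    · exact (hmemS s).2 h2
  have hadjSL : ∀ s ∈ S, ∀ l : V, G.Adj s l → l ∈ L := by
    intro s hs l hsl
    rcases hbip' s l hsl with ⟨_, h2⟩ | ⟨h1, _⟩
    · exact (hmemL l).2 h2
    · rw [hmemS] at hs; omega
  have hnfL : ∀ l ∈ L, G.neighborFinset l ⊆ S := by
    intro l hl s hs
    exact hadjLS l hl s (by simpa using hs)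
  have hnfS : ∀ s ∈ S, G.neighborFinset s ⊆ L := by
    intro s hs l hl
    exact hadjSL s hs l (by simpa using hl)
  -- edge count
  have hedge : ∑ l ∈ L, d l = ∑ s ∈ S, d s := by
    have e1 : ∀ l ∈ L, (G.neighborFinset l).card = ∑ s ∈ S, if G.Adj l s then 1 else 0 := by
      intro l hl
      rw [← Finset.card_filter]
      congr 1
      ext s
      simp only [Finset.mem_filter, SimpleGraph.mem_neighborFinset]
      exact ⟨fun hs => ⟨hnfL l hl (by simpa using hs), hs⟩, fun hs => hs.2⟩
    rw [show (∑ l ∈ L, d l) = ∑ l ∈ L, (G.neighborFinset l).card from rfl,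
      Finset.sum_congr rfl e1, Finset.sum_comm]
    refine Finset.sum_congr rfl fun s hs => ?_
    rw [← Finset.card_filter]
    congr 1
    ext l
    simp only [Finset.mem_filter, SimpleGraph.mem_neighborFinset]
    constructor
    · rintro ⟨hl, ha⟩; exact ha.symm
    · intro ha; exact ⟨hnfS s hs (by simpa using ha), ha.symm⟩
  have h2S3L : 2 * S.card = 3 * L.card := by
    have e1 : ∑ l ∈ L, d l = 3 * L.card := by
      rw [Finset.sum_congr rfl (fun l hl => (hmemL l).1 hl), Finset.sum_const,
        smul_eq_mul, mul_comm]
    have e2 : ∑ s ∈ S, d s = 2 * S.card := by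
      rw [Finset.sum_congr rfl (fun s hs => (hmemS s).1 hs), Finset.sum_const,
        smul_eq_mul, mul_comm]
    omega
  -- the "only two neighbors" fact for S vertices
  have htwo : ∀ s ∈ S, ∀ x y z : V, G.Adj x s → G.Adj y s → G.Adj z s →
      x = y ∨ x = z ∨ y = z := by
    intro s hs x y z hx hy hz
    by_contra hcon
    push_neg at hcon
    obtain ⟨hxy, hxz, hyz⟩ := hcon
    have hsub : ({x, y, z} : Finset V) ⊆ G.neighborFinset s := by
      intro w hw
      simp only [Finset.mem_insert, Finset.mem_singleton] at hw
      rcases hw with rfl | rfl | rfl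
      · simpa using hx.symm
      · simpa using hy.symm
      · simpa using hz.symm
    have h3 : ({x, y, z} : Finset V).card = 3 := by
      rw [Finset.card_insert_of_notMem (by simp [hxy, hxz]),
        Finset.card_insert_of_notMem (by simp [hyz]), Finset.card_singleton]
    have hle := Finset.card_le_card hsub
    rw [h3] at hle
    have h2 : (G.neighborFinset s).card = 2 := (hmemS s).1 hs
    omega
  -- maximal independent set A in the "link" multigraph on L
  set Indep : Finset V → Prop :=
    fun A => A ⊆ L ∧ ∀ a ∈ A, ∀ b ∈ A, a ≠ b → ∀ s : V, ¬(G.Adj a s ∧ G.Adj b s) with hIndep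
  have hfamne : (L.powerset.filter Indep).Nonempty := by
    refine ⟨∅, ?_⟩
    simp only [Finset.mem_filter, Finset.mem_powerset]
    exact ⟨Finset.empty_subset L, Finset.empty_subset L, by simp⟩
  obtain ⟨A, hAmem, hAmax⟩ := Finset.exists_max_image (L.powerset.filter Indep) Finset.card hfamne
  rw [Finset.mem_filter, Finset.mem_powerset] at hAmem
  obtain ⟨hAL, -, hAind⟩ := hAmem
  -- domination by A in the link graph
  have hdom : ∀ l ∈ L, l ∉ A → ∃ s, G.Adj l s ∧ ∃ a ∈ A, G.Adj a s := by
    intro l hlL hlA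
    by_contra hcon
    push_neg at hcon
    have hins : insert l A ∈ L.powerset.filter Indep := by
      rw [Finset.mem_filter, Finset.mem_powerset]
      refine ⟨Finset.insert_subset hlL hAL, Finset.insert_subset hlL hAL, ?_⟩
      intro a ha b hb hab s ⟨has, hbs⟩
      rcases Finset.mem_insert.1 ha with rfl | ha'
      · rcases Finset.mem_insert.1 hb with rfl | hb'
        · exact hab rfl
        · exact hcon s has b hb' hbs
      · rcases Finset.mem_insert.1 hb with rfl | hb'
        · exact hcon s hbs a ha' has
        · exact hAind a ha' b hb' hab s ⟨has, hbs⟩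
    have := hAmax _ hins
    rw [Finset.card_insert_of_notMem hlA] at this
    omega
  -- the sets C l
  set C : V → Finset V := fun l => S.filter (fun s => G.Adj l s ∧ ∃ a ∈ A, G.Adj a s) with hC
  have hCmem : ∀ l s : V, s ∈ C l ↔ s ∈ S ∧ G.Adj l s ∧ ∃ a ∈ A, G.Adj a s := by
    intro l s; rw [hC]; simp
  have hCne : ∀ l ∈ L, l ∉ A → (C l).Nonempty := by
    intro l hlL hlA
    obtain ⟨s, hls, ha⟩ := hdom l hlL hlA
    exact ⟨s, (hCmem l s).2 ⟨hadjLS l hlL s hls, hls, ha⟩⟩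
  have hCsub : ∀ l : V, C l ⊆ G.neighborFinset l := by
    intro l s hs
    rw [hCmem] at hs
    simpa using hs.2.1
  have hCcard : ∀ l ∈ L, (C l).card ≤ 3 := by
    intro l hl
    have := Finset.card_le_card (hCsub l)
    have h3 : (G.neighborFinset l).card = 3 := (hmemL l).1 hl
    omega
  have hCdisj : ∀ l ∈ L \ A, ∀ l' ∈ L \ A, l ≠ l' → Disjoint (C l) (C l') := by
    intro l hl l' hl' hll'
    rw [Finset.mem_sdiff] at hl hl'
    rw [Finset.disjoint_left]
    intro s hs hs'
    rw [hCmem] at hs hs'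
    obtain ⟨hsS, hls, a, haA, has⟩ := hs
    obtain ⟨-, hl's, -⟩ := hs'
    rcases htwo s hsS l l' a hls hl's has with h | h | h
    · exact hll' h
    · exact hl.2 (h ▸ haA)
    · exact hl'.2 (h ▸ haA)
  -- counting: the C l partition the neighbors of A
  set SA : Finset V := S.filter (fun s => ∃ a ∈ A, G.Adj a s) with hSA
  have hSAeq : (L \ A).biUnion C = SA := by
    apply Finset.Subset.antisymm
    · intro s hs
      rw [Finset.mem_biUnion] at hs
      obtain ⟨l, -, hsl⟩ := hs
      rw [hCmem] at hsl
      rw [hSA, Finset.mem_filter]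
      exact ⟨hsl.1, hsl.2.2⟩
    · intro s hs
      rw [hSA, Finset.mem_filter] at hs
      obtain ⟨hsS, a, haA, has⟩ := hs
      have hsd : d s = 2 := (hmemS s).1 hsS
      have hamem : a ∈ G.neighborFinset s := by simpa using has.symm
      obtain ⟨x, y, hxy, hnf⟩ := Finset.card_eq_two.1 hsd
      have hax : a = x ∨ a = y := by
        have := hamem; rw [hnf] at this; simpa using this
      -- b : the other neighbor
      obtain ⟨b, hba, hbmem⟩ : ∃ b, b ≠ a ∧ b ∈ G.neighborFinset s := by
        rcases hax with rfl | rfl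
        · exact ⟨y, hxy.symm, by rw [hnf]; simp⟩
        · exact ⟨x, hxy, by rw [hnf]; simp⟩
      have hab : G.Adj b s := by
        have := hbmem; simp only [SimpleGraph.mem_neighborFinset] at this
        exact this.symm
      have hbL : b ∈ L := hadjSL s hsS b (by simpa using hab.symm)
      have hbA : b ∉ A := by
        intro hbA
        exact hAind a haA b hbA (fun h => hba h.symm) s ⟨has, hab⟩
      rw [Finset.mem_biUnion]
      refine ⟨b, Finset.mem_sdiff.2 ⟨hbL, hbA⟩, (hCmem b s).2 ⟨hsS, hab, a, haA, has⟩⟩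
  have hSAcard : SA.card = 3 * A.card := by
    have heq2 : SA = A.biUnion (fun a => G.neighborFinset a) := by
      apply Finset.Subset.antisymm
      · intro s hs
        rw [hSA, Finset.mem_filter] at hs
        obtain ⟨-, a, haA, has⟩ := hs
        rw [Finset.mem_biUnion]
        exact ⟨a, haA, by simpa using has⟩
      · intro s hs
        rw [Finset.mem_biUnion] at hs
        obtain ⟨a, haA, has⟩ := hs
        rw [SimpleGraph.mem_neighborFinset] at has
        rw [hSA, Finset.mem_filter]
        exact ⟨hadjLS a (hAL haA) s has, a, haA, has⟩
    rw [heq2, Finset.card_biUnion]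
    · rw [Finset.sum_congr rfl (fun a ha => (hmemL a).1 (hAL ha)), Finset.sum_const,
        smul_eq_mul, mul_comm]
    · intro a ha b hb hab
      rw [Function.onFun, Finset.disjoint_left]
      intro s hsa hsb
      rw [SimpleGraph.mem_neighborFinset] at hsa hsb
      exact hAind a ha b hb hab s ⟨hsa, hsb⟩
  have hsumC : ∑ l ∈ L \ A, (C l).card = 3 * A.card := by
    rw [← hSAcard, ← hSAeq, Finset.card_biUnion hCdisj]
  -- choose up to 2 elements of each C l
  have hch : ∀ l : V, ∃ t, t ⊆ C l ∧ t.card = min 2 (C l).card := by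
    intro l
    obtain ⟨t, ht, htc⟩ := Finset.exists_subset_card_eq (min_le_right 2 (C l).card)
    exact ⟨t, ht, htc⟩
  choose El hEl1 hEl2 using hch
  set E' : Finset V := (L \ A).biUnion El with hE'
  have hE'card : E'.card = ∑ l ∈ L \ A, min 2 (C l).card := by
    rw [hE', Finset.card_biUnion]
    · exact Finset.sum_congr rfl fun l _ => hEl2 l
    · intro l hl l' hl' hll'
      exact Finset.disjoint_of_subset_left (hEl1 l)
        (Finset.disjoint_of_subset_right (hEl1 l') (hCdisj l hl l' hl' hll'))
  have hE'sub : E' ⊆ S := by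
    intro s hs
    rw [hE', Finset.mem_biUnion] at hs
    obtain ⟨l, -, hsl⟩ := hs
    exact ((hCmem l s).1 (hEl1 l hsl)).1
  have hE'mem : ∀ s ∈ E', ∃ l, l ∈ L ∧ l ∉ A ∧ s ∈ El l ∧ G.Adj l s ∧ ∃ a ∈ A, G.Adj a s := by
    intro s hs
    rw [hE', Finset.mem_biUnion] at hs
    obtain ⟨l, hl, hsl⟩ := hs
    rw [Finset.mem_sdiff] at hl
    have := (hCmem l s).1 (hEl1 l hsl)
    exact ⟨l, hl.1, hl.2, hsl, this.2.1, this.2.2⟩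
  have huniq : ∀ v : V, v ∉ A → ∀ s ∈ E', G.Adj v s → s ∈ El v := by
    intro v hvA s hs hvs
    obtain ⟨l, hlL, hlA, hsl, hls, a, haA, has⟩ := hE'mem s hs
    have hsS : s ∈ S := hE'sub hs
    rcases htwo s hsS v l a hvs hls has with h | h | h
    · exact h ▸ hsl
    · exact absurd (h ▸ haA) hvA
    · exact absurd (h ▸ haA) hlA
  -- the restrained dominating set
  refine ⟨A ∪ (S \ E'), ?_, ?_⟩
  · constructor
    · -- domination
      intro v hv
      rw [Finset.mem_coe, Finset.mem_union, Finset.mem_sdiff] at hv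
      push_neg at hv
      obtain ⟨hvA, hvSE⟩ := hv
      rcases hLorS v with hvL | hvS
      · -- v ∈ L \ A : find a neighbor in S \ E'
        have hnsub : ¬(G.neighborFinset v ⊆ E') := by
          intro hsub
          have : G.neighborFinset v ⊆ El v := by
            intro s hs
            exact huniq v hvA s (hsub hs) (by simpa using hs)
          have hle := Finset.card_le_card this
          have h3 : (G.neighborFinset v).card = 3 := (hmemL v).1 hvL
          have h4 := hEl2 v
          omega
        obtain ⟨s, hs, hsE⟩ := Finset.not_subset.1 hnsub
        rw [SimpleGraph.mem_neighborFinset] at hs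
        refine ⟨s, ?_, hs⟩
        rw [Finset.mem_coe, Finset.mem_union, Finset.mem_sdiff]
        exact Or.inr ⟨hadjLS v hvL s hs, hsE⟩
      · -- v ∈ S : then v ∈ E', and it has a neighbor in A
        have hvE : v ∈ E' := hvSE hvS
        obtain ⟨l, hlL, hlA, hsl, hls, a, haA, has⟩ := hE'mem v hvE
        refine ⟨a, ?_, has.symm⟩
        rw [Finset.mem_coe, Finset.mem_union]
        exact Or.inl haA
    · -- restraint
      intro v hv
      rw [Finset.mem_coe, Finset.mem_union, Finset.mem_sdiff] at hv
      push_neg at hv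
      obtain ⟨hvA, hvSE⟩ := hv
      rcases hLorS v with hvL | hvS
      · -- v ∈ L \ A : some element of El v is a neighbor outside D
        obtain ⟨s, hs⟩ := Finset.card_pos.1 (by
          have h1 := (hCne v hvL hvA).card_pos
          have h2 := hEl2 v
          omega : 0 < (El v).card)
        have hsC := hEl1 v hs
        rw [hCmem] at hsC
        obtain ⟨hsS, hvs, -⟩ := hsC
        have hsE : s ∈ E' := by
          rw [hE', Finset.mem_biUnion]
          exact ⟨v, Finset.mem_sdiff.2 ⟨hvL, hvA⟩, hs⟩
        refine ⟨s, ?_, hvs⟩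
        rw [Finset.mem_coe, Finset.mem_union, Finset.mem_sdiff]
        push_neg
        refine ⟨fun hsA => hLS s (hAL hsA) hsS, fun _ => hsE⟩
      · -- v ∈ S ∩ E' : the vertex l with v ∈ El l is outside D
        have hvE : v ∈ E' := hvSE hvS
        obtain ⟨l, hlL, hlA, hsl, hls, a, haA, has⟩ := hE'mem v hvE
        refine ⟨l, ?_, hls.symm⟩
        rw [Finset.mem_coe, Finset.mem_union, Finset.mem_sdiff]
        push_neg
        exact ⟨hlA, fun hlS => absurd hlS (hLS l hlL)⟩
  · -- cardinality bound
    have hAdisj : Disjoint A (S \ E') := by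
      rw [Finset.disjoint_left]
      intro a haA haS
      exact hLS a (hAL haA) (Finset.mem_sdiff.1 haS).1
    have hDcard : (A ∪ (S \ E')).card = A.card + (S.card - E'.card) := by
      rw [Finset.card_union_of_disjoint hAdisj, Finset.card_sdiff_of_subset hE'sub]
    have hE'S : E'.card ≤ S.card := Finset.card_le_card hE'sub
    have hALcard : A.card ≤ L.card := Finset.card_le_card hAL
    have hLA : (L \ A).card = L.card - A.card := Finset.card_sdiff_of_subset hAL
    -- the key inequality : ∑ (|C l| + 1) ≤ 2 |E'|
    have hkey : ∑ l ∈ L \ A, (C l).card + (L \ A).card ≤ 2 * E'.card := by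
      rw [hE'card, Finset.mul_sum]
      have hle : ∑ l ∈ L \ A, ((C l).card + 1) ≤ ∑ l ∈ L \ A, 2 * min 2 (C l).card := by
        refine Finset.sum_le_sum fun l hl => ?_
        rw [Finset.mem_sdiff] at hl
        have h1 := (hCne l hl.1 hl.2).card_pos
        have h2 := hCcard l hl.1
        omega
      rw [Finset.sum_add_distrib, Finset.sum_const, smul_eq_mul, mul_one] at hle
      simpa using hle
    rw [hDcard]
    rw [hsumC] at hkey
    omega

/-- If every vertex of `G` has degree `2` or `3` and every edge joins a vertex
of degree `2` to a vertex of degree `3`, then `γ_r(G)` is at most the number of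
degree-3 vertices of `G`. -/
theorem restrainedDominationNumber_le_card_degreeThree
    {V : Type*} [Fintype V] (G : SimpleGraph V)
    (hdeg : ∀ v : V, (G.neighborSet v).ncard = 2 ∨ (G.neighborSet v).ncard = 3)
    (hbip : ∀ u v : V, G.Adj u v →
      ((G.neighborSet u).ncard = 2 ∧ (G.neighborSet v).ncard = 3) ∨
      ((G.neighborSet u).ncard = 3 ∧ (G.neighborSet v).ncard = 2)) :
    restrainedDominationNumber G ≤ {v : V | (G.neighborSet v).ncard = 3}.ncard := by
  classical
  obtain ⟨D, hD, hcard⟩ := rds_aux G hdeg hbip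
  have h1 : restrainedDominationNumber G ≤ D.card :=
    Nat.sInf_le ⟨↑D, hD, Set.ncard_coe_finset D⟩
  have h2 : {v : V | (G.neighborSet v).ncard = 3}.ncard
      = (Finset.univ.filter (fun v => (G.neighborSet v).ncard = 3)).card := by
    rw [← Set.ncard_coe_finset]
    congr 1
    ext v
    simp
  rw [h2]
  exact h1.trans hcard
end

section
/- The cycle C_5 on 5 vertices satisfies γ_r(C_5) = 3; consequently 10·γ_r(C_5) = 5·n_2(C_5) + 4·n_3(C_5) + 5, so the additive constant 5 in the bound 10·γ_r(G) ≤ 5·n_2(G) + 4·n_3(G) + 5 for connected graphs with all degrees 2 or 3 cannot be decreased. -/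
lemma c5_finset_lower : ∀ F : Finset (Fin 5),
    ((∀ v ∉ F, ∃ u ∈ F, (SimpleGraph.cycleGraph 5).Adj v u) ∧
     (∀ v ∉ F, ∃ u ∉ F, (SimpleGraph.cycleGraph 5).Adj v u)) → 3 ≤ F.card := by
  decide

lemma c5_gamma : restrainedDominationNumber (SimpleGraph.cycleGraph 5) = 3 := by
  classical
  have hmem : 3 ∈ {n : ℕ | ∃ S : Set (Fin 5),
      IsRestrainedDomSet (SimpleGraph.cycleGraph 5) S ∧ S.ncard = n} := by
    refine ⟨{0, 1, 2}, ⟨?_, ?_⟩, ?_⟩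
    · decide
    · decide
    · rw [Set.ncard_eq_toFinset_card']
      decide
  refine le_antisymm (Nat.sInf_le hmem) (le_csInf ⟨3, hmem⟩ ?_)
  rintro n ⟨S, ⟨h1, h2⟩, rfl⟩
  have hS : S = ((S.toFinset : Finset (Fin 5)) : Set (Fin 5)) := by simp
  rw [Set.ncard_eq_toFinset_card']
  apply c5_finset_lower
  constructor
  · intro v hv
    obtain ⟨u, hu, hadj⟩ := h1 v (by simpa using hv)
    exact ⟨u, by simpa using hu, hadj⟩
  · intro v hv
    obtain ⟨u, hu, hadj⟩ := h2 v (by simpa using hv)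
    exact ⟨u, by simpa using hu, hadj⟩

lemma c5_deg (v : Fin 5) : ((SimpleGraph.cycleGraph 5).neighborSet v).ncard = 2 := by
  rw [Set.ncard_eq_toFinset_card']
  have : ((SimpleGraph.cycleGraph 5).neighborSet v).toFinset =
      (SimpleGraph.cycleGraph 5).neighborFinset v := rfl
  rw [this]
  exact SimpleGraph.cycleGraph_degree_three_le

/-- The cycle `C₅` satisfies `γ_r(C₅) = 3`, and consequently
`10·γ_r(C₅) = 5·n₂(C₅) + 4·n₃(C₅) + 5`, so the additive constant `5` in the
bound for connected graphs with all degrees `2` or `3` cannot be decreased. -/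
theorem restrainedDominationNumber_cycleGraph_five :
    restrainedDominationNumber (SimpleGraph.cycleGraph 5) = 3 ∧
    10 * restrainedDominationNumber (SimpleGraph.cycleGraph 5) =
      5 * {v : Fin 5 | ((SimpleGraph.cycleGraph 5).neighborSet v).ncard = 2}.ncard
        + 4 * {v : Fin 5 | ((SimpleGraph.cycleGraph 5).neighborSet v).ncard = 3}.ncard
        + 5 := by
  have h2 : {v : Fin 5 | ((SimpleGraph.cycleGraph 5).neighborSet v).ncard = 2} = Set.univ := by
    ext v; simp [c5_deg]
  have h3 : {v : Fin 5 | ((SimpleGraph.cycleGraph 5).neighborSet v).ncard = 3} = ∅ := by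
    ext v; simp [c5_deg]
  refine ⟨c5_gamma, ?_⟩
  rw [c5_gamma, h2, h3]
  simp [Set.ncard_univ]
end
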